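/- Suppose u ∈ 2^{<ω} is placed with witness t (i.e., N_u ∩ K_t ≠ ∅, (|u|−1)₀ = Σ^t_{|t|}, and u(|u|−1) = 1 if (|u|−1)₁ > 0). Then Σ_t := ⟨Σ^t_{|t|},0⟩ < |u|, for each k < |t| the last 1 occurring in u strictly before position ⟨Σ^t_{k+1},0⟩ is at position ⟨Σ^t_k, t(k)+1⟩, and the witness t is unique. -/

import Mathlib

/-- Triangular numbers. -/
def tri (m : ℕ) : ℕ := m * (m + 1) / 2

/-- The pairing `⟨n,p⟩ := (Σ_{k ≤ n+p} k) + p`. -/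
def pairN (n p : ℕ) : ℕ := tri (n + p) + p

/-- `Σ^t_k := Σ_{j<k} (t(j) + 2)`. -/
def sigT (t : List ℕ) (k : ℕ) : ℕ := ((t.take k).map (· + 2)).sum

/-- The set `K_t ⊆ 2^ω`: for each `k < |t|`, the vertical slices numbered
`Σ^t_k, …, Σ^t_k + t(k) + 1` are prescribed: the `i`-th of them is
`(w_{t(k)})_i · 0^∞`, except that the `0`-th one additionally carries a `1`
at position `t(k) + 1` (i.e. equals `(w_{t(k)})₀·0^{t(k)+1-|(w_{t(k)})₀|}·1·0^∞`). -/
def Kt (w : ℕ → List Bool) (t : List ℕ) : Set (ℕ → Bool) :=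
  {α | ∀ k < t.length, ∀ i < t.getD k 0 + 2, ∀ p,
    α (pairN (sigT t k + i) p) =
      if i = 0 ∧ p = t.getD k 0 + 1 then true
      else (w (t.getD k 0)).getD (pairN i p) false}

/-- The clopen piece `K^ε_t := {α ∈ K_t : α(⟨Σ^t_{|t|}, 0⟩) = ε}`. -/
def Keps (w : ℕ → List Bool) (t : List ℕ) (ε : Bool) : Set (ℕ → Bool) :=
  {α | α ∈ Kt w t ∧ α (pairN (sigT t t.length) 0) = ε}

/-- `M(q) := max {m : Σ_{k≤m} k ≤ q}`. -/
def Mq (q : ℕ) : ℕ := Nat.findGreatest (fun m => tri m ≤ q) q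

/-- The second inverse-pairing coordinate: `(q)₁ := q − Σ_{k≤M(q)} k`. -/
def unpair1 (q : ℕ) : ℕ := q - tri (Mq q)

/-- The first inverse-pairing coordinate: `(q)₀ := M(q) − (q)₁`. -/
def unpair0 (q : ℕ) : ℕ := Mq q - unpair1 q

/-- The basic clopen set `N_u := {α : u ⊆ α}`. -/
def Nu (u : List Bool) : Set (ℕ → Bool) := {α | ∀ k < u.length, α k = u.getD k false}

/-- `u` is placed with witness `t`: `N_u ∩ K_t ≠ ∅`, `(|u|−1)₀ = Σ^t_{|t|}`, and
`u(|u|−1) = 1` whenever `(|u|−1)₁ > 0`. -/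
def PlacedWit (w : ℕ → List Bool) (u : List Bool) (t : List ℕ) : Prop :=
  (Nu u ∩ Kt w t).Nonempty ∧ unpair0 (u.length - 1) = sigT t t.length ∧
  (0 < unpair1 (u.length - 1) → u.getD (u.length - 1) false = true)

/-- `u` is placed: `u ≠ ∅` and it has some witness. -/
def Placed (w : ℕ → List Bool) (u : List Bool) : Prop :=
  u ≠ [] ∧ ∃ t : List ℕ, PlacedWit w u t

/-- The initial segment `α|p` as a finite sequence. -/
def restr (α : ℕ → Bool) (p : ℕ) : List Bool := List.ofFn fun i : Fin p => α i


lemma tri_succ (m : ℕ) : tri (m+1) = tri m + (m+1) := by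
  show (m+1)*(m+1+1)/2 = m*(m+1)/2 + (m+1)
  have h : (m+1)*(m+1+1) = m*(m+1) + (m+1)*2 := by ring
  rw [h, Nat.add_mul_div_right _ _ (by norm_num)]

lemma tri_ge (m : ℕ) : m ≤ tri m := by
  induction m with
  | zero => simp [tri]
  | succ n ih => rw [tri_succ]; omega

lemma tri_mono : Monotone tri :=
  monotone_nat_of_le_succ (fun n => by rw [tri_succ]; omega)

lemma pairN_lt_of_sum_lt {n p n' p' : ℕ} (h : n + p < n' + p') :
    pairN n p < pairN n' p' := by
  have h1 : tri (n+p) + (n+p) < tri (n+p+1) := by rw [tri_succ]; omega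
  have h2 : tri (n+p+1) ≤ tri (n'+p') := tri_mono h
  unfold pairN; omega

lemma Mq_pair (n p : ℕ) : Mq (pairN n p) = n + p := by
  rw [Mq, Nat.findGreatest_eq_iff]
  refine ⟨?_, fun _ => by unfold pairN; omega, fun j hj hj2 hj3 => ?_⟩
  · have := tri_ge (n+p); unfold pairN; omega
  · have h1 : tri (n+p+1) ≤ tri j := tri_mono hj
    rw [tri_succ] at h1
    unfold pairN at hj3; omega

lemma unpair1_pair (n p : ℕ) : unpair1 (pairN n p) = p := by
  rw [unpair1, Mq_pair]; unfold pairN; omega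

lemma unpair0_pair (n p : ℕ) : unpair0 (pairN n p) = n := by
  rw [unpair0, Mq_pair, unpair1_pair]
  have := tri_ge (n + p); omega

lemma pair_surj (q : ℕ) : ∃ n p, pairN n p = q := by
  set M := Mq q with hM
  have h1 : tri M ≤ q :=
    Nat.findGreatest_spec (P := fun m => tri m ≤ q) (m := 0) (Nat.zero_le q) (by simp [tri])
  have h2 : q < tri (M + 1) := by
    by_contra h
    push_neg at h
    exact Nat.findGreatest_is_greatest (Nat.lt_succ_self M)
      (le_trans (tri_ge _) h) h
  rw [tri_succ] at h2
  refine ⟨M - (q - tri M), q - tri M, ?_⟩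
  have hle : q - tri M ≤ M := by omega
  unfold pairN
  rw [Nat.sub_add_cancel hle]
  omega

lemma sigT_zero (t : List ℕ) : sigT t 0 = 0 := rfl

lemma sigT_succ (t : List ℕ) {k : ℕ} (h : k < t.length) :
    sigT t (k+1) = sigT t k + (t.getD k 0 + 2) := by
  unfold sigT
  rw [List.take_succ, List.getElem?_eq_getElem h, Option.toList_some, List.map_append,
      List.sum_append, List.getD_eq_getElem t 0 h]
  simp

lemma sigT_le_succ (t : List ℕ) (k : ℕ) : sigT t k ≤ sigT t (k+1) := by
  rcases lt_or_ge k t.length with h | h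
  · rw [sigT_succ t h]; omega
  · unfold sigT; rw [List.take_of_length_le h, List.take_of_length_le (by omega)]

lemma sigT_mono (t : List ℕ) : Monotone (sigT t) :=
  monotone_nat_of_le_succ (sigT_le_succ t)

lemma sigT_lt (t : List ℕ) {k K : ℕ} (h : k < K) (hK : K ≤ t.length) :
    sigT t k < sigT t K := by
  have h1 : sigT t (k+1) ≤ sigT t K := sigT_mono t h
  rw [sigT_succ t (by omega)] at h1
  omega

lemma sigT_decomp (t : List ℕ) : ∀ K, K ≤ t.length → ∀ n, n < sigT t K →
    ∃ k' < K, ∃ i < t.getD k' 0 + 2, n = sigT t k' + i := by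
  intro K
  induction K with
  | zero => intro _ n hn; rw [sigT_zero] at hn; omega
  | succ K ih =>
    intro hK n hn
    rcases lt_or_ge n (sigT t K) with h | h
    · obtain ⟨k', hk', i, hi, hni⟩ := ih (by omega) n h
      exact ⟨k', by omega, i, hi, hni⟩
    · rw [sigT_succ t (by omega)] at hn
      exact ⟨K, Nat.lt_succ_self K, n - sigT t K, by omega, by omega⟩

lemma kt_marker {w : ℕ → List Bool} {t : List ℕ} {α : ℕ → Bool}
    (hα : α ∈ Kt w t) {k : ℕ} (hk : k < t.length) :
    α (pairN (sigT t k) (t.getD k 0 + 1)) = true := by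
  have := hα k hk 0 (by omega) (t.getD k 0 + 1)
  simpa using this

lemma kt_zero {w : ℕ → List Bool} (hw : ∀ n, (w n).length = n + 1)
    {t : List ℕ} {α : ℕ → Bool} (hα : α ∈ Kt w t) {k : ℕ} (hk : k < t.length)
    {m : ℕ} (h1 : pairN (sigT t k) (t.getD k 0 + 1) < m)
    (h2 : m < pairN (sigT t (k+1)) 0) : α m = false := by
  obtain ⟨n, p, hm⟩ := pair_surj m
  set s := sigT t k with hs
  set T := t.getD k 0 with hT
  have hsk : sigT t (k+1) = s + T + 2 := by rw [sigT_succ t hk]; omega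
  rw [hsk] at h2
  have hq : pairN s (T+1) = tri (s+T+1) + (T+1) := rfl
  have hq2 : pairN (s+T+2) 0 = tri (s+T+2) := by simp [pairN]
  rw [hq2] at h2
  -- n + p = s + T + 1
  have hnp : n + p = s + T + 1 := by
    rcases lt_trichotomy (n + p) (s + T + 1) with h | h | h
    · exfalso
      have ha : tri (n+p) + (n+p) < tri (n+p+1) := by rw [tri_succ]; omega
      have hb : tri (n+p+1) ≤ tri (s+T+1) := tri_mono (by omega)
      have : m = tri (n+p) + p := by rw [← hm]; rfl
      omega
    · exact h
    · exfalso
      have hb : tri (s+T+2) ≤ tri (n+p) := tri_mono (by omega)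
      have : m = tri (n+p) + p := by rw [← hm]; rfl
      omega
  have hmv : m = tri (s+T+1) + p := by rw [← hm]; unfold pairN; rw [hnp]
  have hp : T + 1 < p := by omega
  have hns : n < s := by omega
  obtain ⟨k', hk', i, hi, hni⟩ := sigT_decomp t k (by omega) n hns
  have hk'len : k' < t.length := by omega
  have hstep : sigT t k' + (t.getD k' 0 + 2) ≤ s := by
    have := sigT_mono t (show k' + 1 ≤ k by omega)
    rw [sigT_succ t hk'len] at this
    omega
  have hip : t.getD k' 0 + 3 ≤ i + p := by omega
  have hval := hα k' hk'len i hi p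
  rw [← hni] at hval
  rw [hm] at hval
  rw [hval]
  rw [if_neg (by omega)]
  apply List.getD_eq_default
  rw [hw]
  have : i + p ≤ tri (i + p) + p := by have := tri_ge (i+p); omega
  unfold pairN
  omega

lemma len_bound {w : ℕ → List Bool} {u : List Bool} {t : List ℕ}
    (hu : u ≠ []) (hwit : PlacedWit w u t) :
    pairN (sigT t t.length) 0 < u.length := by
  obtain ⟨n, p, hnp⟩ := pair_surj (u.length - 1)
  have hn : n = sigT t t.length := by rw [← hwit.2.1, ← hnp, unpair0_pair]
  have hlen : 1 ≤ u.length := List.length_pos_iff.mpr hu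
  have h1 : tri (sigT t t.length) ≤ tri (n + p) := tri_mono (by omega)
  have h2 : tri (n + p) + p = u.length - 1 := hnp
  have h3 : pairN (sigT t t.length) 0 = tri (sigT t t.length) := by simp [pairN]
  omega

lemma helper_not_lt {w : ℕ → List Bool} (hw : ∀ n, (w n).length = n + 1)
    {u : List Bool} (hu : u ≠ []) {t t' : List ℕ}
    (h : PlacedWit w u t) (h' : PlacedWit w u t') {k : ℕ}
    (hk : k < t.length) (hk' : k < t'.length) (hs : sigT t k = sigT t' k) :
    ¬ (t.getD k 0 < t'.getD k 0) := by
  intro hlt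
  obtain ⟨α, hαu, hαK⟩ := h.1
  obtain ⟨α', hα'u, hα'K⟩ := h'.1
  set p := t'.getD k 0 + 1 with hp
  set q' := pairN (sigT t' k) p with hq'
  have h1' : α' q' = true := kt_marker hα'K hk'
  have hfalse : α q' = false := by
    have hval := hαK k hk 0 (by omega) p
    rw [add_zero, hs] at hval
    rw [hq', hval, if_neg (by omega)]
    apply List.getD_eq_default
    rw [hw]
    have : p ≤ tri (0 + p) + p := by omega
    unfold pairN
    omega
  have hql : q' < u.length := by
    have hb := len_bound hu h'
    have hlt2 : q' < pairN (sigT t' t'.length) 0 := by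
      apply pairN_lt_of_sum_lt
      have h1 : sigT t' (k+1) ≤ sigT t' t'.length := sigT_mono t' hk'
      rw [sigT_succ t' hk'] at h1
      omega
    omega
  have e1 := hαu q' hql
  have e2 := hα'u q' hql
  rw [hfalse] at e1
  rw [h1'] at e2
  rw [← e1] at e2
  simp at e2

/-- if `u` is placed with witness `t`, then `Σ_t < |u|`, for each
`k < |t|` the last `1` in `u` strictly before position `⟨Σ^t_{k+1}, 0⟩` is at
position `⟨Σ^t_k, t(k)+1⟩`, and the witness is unique. -/
theorem stmt17 (w : ℕ → List Bool) (hw : ∀ n, (w n).length = n + 1)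
    (u : List Bool) (hu : u ≠ []) (t : List ℕ) (hwit : PlacedWit w u t) :
    pairN (sigT t t.length) 0 < u.length ∧
    (∀ k < t.length,
      u.getD (pairN (sigT t k) (t.getD k 0 + 1)) false = true ∧
      ∀ m, pairN (sigT t k) (t.getD k 0 + 1) < m → m < pairN (sigT t (k + 1)) 0 →
        u.getD m false = false) ∧
    (∀ t' : List ℕ, PlacedWit w u t' → t' = t) := by
  have hlb := len_bound hu hwit
  obtain ⟨α, hαu, hαK⟩ := hwit.1
  refine ⟨hlb, ?_, ?_⟩
  · intro k hk
    have hlt1 : pairN (sigT t k) (t.getD k 0 + 1) < pairN (sigT t t.length) 0 := by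
      apply pairN_lt_of_sum_lt
      have h1 : sigT t (k+1) ≤ sigT t t.length := sigT_mono t hk
      rw [sigT_succ t hk] at h1
      omega
    have hlt2 : pairN (sigT t (k+1)) 0 ≤ pairN (sigT t t.length) 0 := by
      have := tri_mono (Nat.add_le_add_right (sigT_mono t (show k+1 ≤ t.length from hk)) 0)
      unfold pairN
      omega
    constructor
    · rw [← hαu _ (by omega)]
      exact kt_marker hαK hk
    · intro m hm1 hm2
      rw [← hαu m (by omega)]
      exact kt_zero hw hαK hk hm1 hm2
  · intro t' hwit'
    have key : ∀ k, k ≤ t.length → k ≤ t'.length → t'.take k = t.take k := by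
      intro k
      induction k with
      | zero => simp
      | succ k ih =>
        intro h1 h2
        have hk : k < t.length := by omega
        have hk' : k < t'.length := by omega
        have htake := ih (by omega) (by omega)
        have hs : sigT t k = sigT t' k := by
          unfold sigT; rw [htake]
        have heq : t.getD k 0 = t'.getD k 0 := by
          rcases lt_trichotomy (t.getD k 0) (t'.getD k 0) with h | h | h
          · exact absurd h (helper_not_lt hw hu hwit hwit' hk hk' hs)
          · exact h
          · exact absurd h (helper_not_lt hw hu hwit' hwit hk' hk hs.symm)
        rw [List.take_succ, List.take_succ, htake,
            List.getElem?_eq_getElem hk, List.getElem?_eq_getElem hk']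
        rw [← List.getD_eq_getElem t 0 hk, ← List.getD_eq_getElem t' 0 hk', heq]
    have hS : sigT t' t'.length = sigT t t.length := by
      rw [← hwit.2.1, ← hwit'.2.1]
    have hlen : t.length = t'.length := by
      by_contra hne
      rcases Ne.lt_or_gt hne with hlt | hlt
      · have h1 := key t.length le_rfl (le_of_lt hlt)
        have h2 : sigT t' t.length = sigT t t.length := by
          unfold sigT; rw [h1]
        have h3 : sigT t' t.length < sigT t' t'.length := sigT_lt t' hlt le_rfl
        omega
      · have h1 := key t'.length (le_of_lt hlt) le_rfl
        have h2 : sigT t' t'.length = sigT t t'.length := by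
          unfold sigT; rw [h1]
        have h3 : sigT t t'.length < sigT t t.length := sigT_lt t hlt le_rfl
        omega
    have := key t.length le_rfl (le_of_eq hlen)
    rw [List.take_length] at this
    rw [hlen, List.take_length] at this
    exact this
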